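/- Every integer triple (x, b, c) with x² - 1 = b·c in which exactly two of x, b, c are odd lies in the orbit of the triple (0, 1, -1) under the group generated by N: (x, b, c) ↦ (x, c, b), T: (x, b, c) ↦ (x + b, b, b + 2x + c), and T⁻¹: (x, b, c) ↦ (x - b, b, b - 2x + c). -/

import Mathlib

/-- Exactly two of the three given integers are odd. -/
def exactlyTwoOdd (x b c : ℤ) : Prop :=
  (Odd x ∧ Odd b ∧ Even c) ∨ (Odd x ∧ Even b ∧ Odd c) ∨ (Even x ∧ Odd b ∧ Odd c)

/-- One step of the maps N, T, T⁻¹ on integer triples. -/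
def dedekindStep (t t' : ℤ × ℤ × ℤ) : Prop :=
  t' = (t.1, t.2.2, t.2.1) ∨
  t' = (t.1 + t.2.1, t.2.1, t.2.1 + 2 * t.1 + t.2.2) ∨
  t' = (t.1 - t.2.1, t.2.1, t.2.1 - 2 * t.1 + t.2.2)

lemma stepN (x b c : ℤ) : dedekindStep (x, b, c) (x, c, b) := Or.inl rfl

lemma stepT (x b c : ℤ) : dedekindStep (x, b, c) (x + b, b, b + 2 * x + c) :=
  Or.inr (Or.inl rfl)

lemma stepTi (x b c : ℤ) : dedekindStep (x, b, c) (x - b, b, b - 2 * x + c) :=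
  Or.inr (Or.inr rfl)

lemma step_symm : Symmetric dedekindStep := by
  rintro ⟨x, b, c⟩ t' (h | h | h) <;> subst h
  · exact Or.inl rfl
  · refine Or.inr (Or.inr ?_)
    simp only [Prod.mk.injEq]
    refine ⟨by ring, trivial, by ring⟩
  · refine Or.inr (Or.inl ?_)
    simp only [Prod.mk.injEq]
    refine ⟨by ring, trivial, by ring⟩

lemma parity_swap {x b c : ℤ} (h : exactlyTwoOdd x b c) : exactlyTwoOdd x c b := by
  unfold exactlyTwoOdd at *; tauto

lemma parity_T {x b c : ℤ} (h : exactlyTwoOdd x b c) :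
    exactlyTwoOdd (x + b) b (b + 2 * x + c) := by
  simp only [exactlyTwoOdd, Int.odd_iff, Int.even_iff] at *
  omega

lemma parity_Ti {x b c : ℤ} (h : exactlyTwoOdd x b c) :
    exactlyTwoOdd (x - b) b (b - 2 * x + c) := by
  simp only [exactlyTwoOdd, Int.odd_iff, Int.even_iff] at *
  omega

lemma stepUp {x : ℤ} (hx : x = 1 ∨ x = -1) (c : ℤ) :
    dedekindStep (x, 0, c) (x, 0, c + 2) := by
  rcases hx with rfl | rfl
  · refine Or.inr (Or.inl ?_)
    simp only [Prod.mk.injEq]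
    refine ⟨by ring, trivial, by ring⟩
  · refine Or.inr (Or.inr ?_)
    simp only [Prod.mk.injEq]
    refine ⟨by ring, trivial, by ring⟩

lemma stepDown {x : ℤ} (hx : x = 1 ∨ x = -1) (c : ℤ) :
    dedekindStep (x, 0, c) (x, 0, c - 2) := by
  rcases hx with rfl | rfl
  · refine Or.inr (Or.inr ?_)
    simp only [Prod.mk.injEq]
    refine ⟨by ring, trivial, by ring⟩
  · refine Or.inr (Or.inl ?_)
    simp only [Prod.mk.injEq]
    refine ⟨by ring, trivial, by ring⟩

lemma toOneAux {x : ℤ} (hx : x = 1 ∨ x = -1) :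
    ∀ n : ℕ, ∀ c : ℤ, (c = 1 + 2 * (n : ℤ) ∨ c = 1 - 2 * (n : ℤ)) →
      Relation.ReflTransGen dedekindStep (x, 0, c) (x, 0, 1) := by
  intro n
  induction n with
  | zero =>
    intro c hc
    have : c = 1 := by omega
    subst this
    exact Relation.ReflTransGen.refl
  | succ k ih =>
    intro c hc
    rcases hc with hc | hc
    · refine Relation.ReflTransGen.head (stepDown hx c) ?_
      apply ih
      left; omega
    · refine Relation.ReflTransGen.head (stepUp hx c) ?_
      apply ih
      right; omega

lemma toOne {x : ℤ} (hx : x = 1 ∨ x = -1) {c : ℤ} (hc : Odd c) :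
    Relation.ReflTransGen dedekindStep (x, 0, c) (x, 0, 1) := by
  obtain ⟨k, hk⟩ := hc
  rcases le_or_gt 0 k with hk0 | hk0
  · exact toOneAux hx k.toNat c (by left; omega)
  · exact toOneAux hx (-k).toNat c (by right; omega)

lemma finish1 : Relation.ReflTransGen dedekindStep ((1 : ℤ), 0, 1) (0, 1, -1) := by
  have h1 := stepN 1 0 1
  have h2 : dedekindStep ((1 : ℤ), 1, 0) (0, 1, -1) := by
    refine Or.inr (Or.inr ?_); norm_num
  exact Relation.ReflTransGen.head h1 (Relation.ReflTransGen.head h2 .refl)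

lemma finish2 : Relation.ReflTransGen dedekindStep ((-1 : ℤ), 0, 1) (0, 1, -1) := by
  have h1 := stepN (-1) 0 1
  have h2 : dedekindStep ((-1 : ℤ), 1, 0) (0, 1, -1) := by
    refine Or.inr (Or.inl ?_); norm_num
  exact Relation.ReflTransGen.head h1 (Relation.ReflTransGen.head h2 .refl)

lemma reduce_step (x b c : ℤ) (h : x ^ 2 - 1 = b * c) (hp : exactlyTwoOdd x b c)
    (hblt : b.natAbs < x.natAbs) (hb0 : b ≠ 0) :
    ∃ x' c', dedekindStep (x, b, c) (x', b, c') ∧ x' ^ 2 - 1 = b * c' ∧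
      exactlyTwoOdd x' b c' ∧ x'.natAbs < x.natAbs := by
  rcases (show (x + b).natAbs < x.natAbs ∨ (x - b).natAbs < x.natAbs by omega) with hlt | hlt
  · exact ⟨x + b, b + 2 * x + c, stepT x b c, by linear_combination h, parity_T hp, hlt⟩
  · exact ⟨x - b, b - 2 * x + c, stepTi x b c, by linear_combination h, parity_Ti hp, hlt⟩

lemma small_side {x b c : ℤ} (h : x ^ 2 - 1 = b * c) (hle : b.natAbs ≤ c.natAbs)
    (hx2 : 2 ≤ x.natAbs) : b.natAbs < x.natAbs := by
  have hx1 : 1 ≤ x ^ 2 := by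
    have : 2 ≤ x ∨ x ≤ -2 := by omega
    rcases this with h' | h' <;> nlinarith
  have e : b.natAbs * c.natAbs = (x ^ 2 - 1).natAbs := by
    rw [← Int.natAbs_mul, ← h]
  have e2 : x.natAbs * x.natAbs = (x ^ 2).natAbs := by
    rw [pow_two, Int.natAbs_mul]
  have e3 : (x ^ 2 - 1).natAbs < (x ^ 2).natAbs := by omega
  have key : b.natAbs * b.natAbs < x.natAbs * x.natAbs := by
    calc b.natAbs * b.natAbs ≤ b.natAbs * c.natAbs := Nat.mul_le_mul_left _ hle
      _ = (x ^ 2 - 1).natAbs := e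
      _ < (x ^ 2).natAbs := e3
      _ = x.natAbs * x.natAbs := e2.symm
  by_contra hcon
  push_neg at hcon
  exact absurd (Nat.mul_le_mul hcon hcon) (by omega)

lemma descend : ∀ n : ℕ, ∀ x b c : ℤ, x.natAbs = n → x ^ 2 - 1 = b * c →
    exactlyTwoOdd x b c →
    Relation.ReflTransGen dedekindStep (x, b, c) (0, 1, -1) := by
  intro n
  induction n using Nat.strong_induction_on with
  | _ n ih =>
    intro x b c hn h hp
    by_cases h0 : x = 0
    · subst h0
      have hbc : b * c = -1 := by linarith
      have hbu : b = 1 ∨ b = -1 := by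
        have : IsUnit b := IsUnit.of_mul_eq_one (-c) (by linarith [hbc])
        exact Int.isUnit_iff.mp this
      rcases hbu with rfl | rfl
      · have : c = -1 := by linarith
        subst this
        exact Relation.ReflTransGen.refl
      · have : c = 1 := by linarith
        subst this
        exact Relation.ReflTransGen.head (stepN 0 (-1) 1) Relation.ReflTransGen.refl
    · by_cases h1 : x = 1 ∨ x = -1
      · have hxod : x % 2 = 1 := by rcases h1 with rfl | rfl <;> decide
        have hbc : b * c = 0 := by rcases h1 with rfl | rfl <;> linarith
        have hfin : Relation.ReflTransGen dedekindStep (x, 0, 1) (0, 1, -1) := by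
          rcases h1 with rfl | rfl
          · exact finish1
          · exact finish2
        rcases mul_eq_zero.mp hbc with rfl | rfl
        · have hc : Odd c := by
            simp only [exactlyTwoOdd, Int.odd_iff, Int.even_iff] at hp
            rw [Int.odd_iff]
            omega
          exact (toOne h1 hc).trans hfin
        · have hb : Odd b := by
            simp only [exactlyTwoOdd, Int.odd_iff, Int.even_iff] at hp
            rw [Int.odd_iff]
            omega
          exact Relation.ReflTransGen.head (stepN x b 0) ((toOne h1 hb).trans hfin)
      · have hx2 : 2 ≤ x.natAbs := by omega
        have hb0 : b ≠ 0 := by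
          rintro rfl
          have : 2 ≤ x ∨ x ≤ -2 := by omega
          rcases this with h' | h' <;> nlinarith
        have hc0 : c ≠ 0 := by
          rintro rfl
          have : 2 ≤ x ∨ x ≤ -2 := by omega
          rcases this with h' | h' <;> nlinarith
        rcases le_total b.natAbs c.natAbs with hle | hle
        · have hblt : b.natAbs < x.natAbs := small_side h hle hx2
          obtain ⟨x', c', hstep, hinv, hpar, hlt⟩ := reduce_step x b c h hp hblt hb0
          exact Relation.ReflTransGen.head hstep
            (ih x'.natAbs (by omega) x' b c' rfl hinv hpar)
        · have hclt : c.natAbs < x.natAbs :=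
            small_side (h.trans (mul_comm b c)) hle hx2
          obtain ⟨x', b', hstep, hinv, hpar, hlt⟩ :=
            reduce_step x c b (h.trans (mul_comm b c)) (parity_swap hp) hclt hc0
          exact Relation.ReflTransGen.head (stepN x b c)
            (Relation.ReflTransGen.head hstep
              (ih x'.natAbs (by omega) x' c b' rfl hinv hpar))

theorem stmt_6 (x b c : ℤ) (h : x ^ 2 - 1 = b * c) (hp : exactlyTwoOdd x b c) :
    Relation.ReflTransGen dedekindStep (0, 1, -1) (x, b, c) := by
  have hd := descend x.natAbs x b c rfl h hp
  exact (@Relation.ReflTransGen.stdSymm _ _ ⟨fun a b h => step_symm h⟩).symm _ _ hd
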